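/- Let bV, bF : ℤ × ℤ → EuclideanSpace ℝ (Fin 3) and ρV, ρF : ℤ × ℤ → ℝ satisfy ⟪bV(v), bF(f)⟫ = ρV(v) + ρF(f) for every incident vertex–face pair (v, f). Define the Möbius lift L(d) = (b(d)₀, b(d)₁, b(d)₂, ρ(d) − 1/2, ρ(d) + 1/2) ∈ ℝ⁵, for vertices using (bV, ρV) and for faces using (bF, ρF). Then (bV, bF) is a conjugate binet if and only if for every p ∈ ℤ × ℤ the four lift vectors LV(p), LV(p+(1,0)), LV(p+(0,1)), LV(p+(1,1)) span a submodule of ℝ⁵ of finrank at most 3, and likewise the four lift vectors LF(p), LF(p+(1,0)), LF(p+(0,1)), LF(p+(1,1)). (An orthogonal binet is a principal binet if and only if its Möbius lift is a conjugate binet.) -/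

import Mathlib

open scoped InnerProductSpace

/-- A vertex `v` is incident to the face labeled `f` if `v` is one of its four corners. -/
def Incident (v f : ℤ × ℤ) : Prop :=
  v = f ∨ v = f + (1, 0) ∨ v = f + (0, 1) ∨ v = f + (1, 1)

/-- The set of pairwise differences of elements of a set. -/
def pairDiffs {E : Type*} [AddCommGroup E] (s : Set E) : Set E :=
  {x | ∃ y ∈ s, ∃ z ∈ s, x = y - z}

/-- A map `g : ℤ × ℤ → E` is a conjugate net if the four points of each quad are coplanar,
i.e. the submodule spanned by their pairwise differences has finrank at most `2`. -/
def IsConjugateNet {E : Type*} [AddCommGroup E] [Module ℝ E] (g : ℤ × ℤ → E) : Prop :=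
  ∀ p : ℤ × ℤ, Module.finrank ℝ
    (Submodule.span ℝ (pairDiffs
      ({g p, g (p + (1, 0)), g (p + (0, 1)), g (p + (1, 1))} : Set E))) ≤ 2

/-- The Möbius lift `L(d) = (b(d)₀, b(d)₁, b(d)₂, ρ(d) - 1/2, ρ(d) + 1/2)` of a sphere with
center `b d` and `2ρ(d) = ‖b d‖² - r²`. -/
noncomputable def mlift (b : ℤ × ℤ → EuclideanSpace ℝ (Fin 3)) (ρ : ℤ × ℤ → ℝ)
    (d : ℤ × ℤ) : Fin 5 → ℝ :=
  ![b d 0, b d 1, b d 2, ρ d - 1 / 2, ρ d + 1 / 2]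

lemma pairDiffs_affine_image {E F : Type*} [AddCommGroup E] [AddCommGroup F]
    [Module ℝ E] [Module ℝ F] (T : E →ₗ[ℝ] F) (w : F) (s : Set E) :
    pairDiffs ((fun x => T x + w) '' s) = T '' pairDiffs s := by
  ext x
  constructor
  · rintro ⟨y, ⟨a, ha, rfl⟩, z, ⟨b, hb, rfl⟩, rfl⟩
    exact ⟨a - b, ⟨a, ha, b, hb, rfl⟩, by simp⟩
  · rintro ⟨u, ⟨a, ha, b, hb, rfl⟩, rfl⟩
    exact ⟨T a + w, ⟨a, ha, rfl⟩, T b + w, ⟨b, hb, rfl⟩, by simp⟩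

lemma hyperplane_iff (S : Set (Fin 5 → ℝ)) (v : Fin 5 → ℝ) (hv : v ∈ S)
    (hone : ∀ x ∈ S, x 4 - x 3 = 1) :
    Module.finrank ℝ (Submodule.span ℝ S) ≤ 3 ↔
      Module.finrank ℝ (Submodule.span ℝ (pairDiffs S)) ≤ 2 := by
  set φ : (Fin 5 → ℝ) →ₗ[ℝ] ℝ :=
    (LinearMap.proj 4 : (Fin 5 → ℝ) →ₗ[ℝ] ℝ) - LinearMap.proj 3 with hφ
  have hφv : φ v = 1 := by simpa [φ] using hone v hv
  have hker : Submodule.span ℝ (pairDiffs S) ≤ LinearMap.ker φ := by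
    rw [Submodule.span_le]
    rintro x ⟨y, hy, z, hz, rfl⟩
    have h1 := hone y hy
    have h2 := hone z hz
    simp only [SetLike.mem_coe, LinearMap.mem_ker, hφ, LinearMap.sub_apply,
      LinearMap.proj_apply, Pi.sub_apply]
    linarith
  have hvne : v ≠ 0 := fun hv0 => by rw [hv0] at hφv; simp at hφv
  have hdisj : Submodule.span ℝ {v} ⊓ Submodule.span ℝ (pairDiffs S) = ⊥ := by
    rw [eq_bot_iff]
    rintro x hx
    obtain ⟨hx1, hx2⟩ := Submodule.mem_inf.mp hx
    obtain ⟨r, rfl⟩ := Submodule.mem_span_singleton.mp hx1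
    have h0 : φ (r • v) = 0 := hker hx2
    rw [map_smul, hφv, smul_eq_mul, mul_one] at h0
    simp [h0]
  have hrank1 : Module.finrank ℝ (Submodule.span ℝ ({v} : Set (Fin 5 → ℝ))) = 1 :=
    finrank_span_singleton hvne
  have heq := Submodule.finrank_sup_add_finrank_inf_eq
    (Submodule.span ℝ ({v} : Set (Fin 5 → ℝ))) (Submodule.span ℝ (pairDiffs S))
  rw [hdisj, finrank_bot, hrank1] at heq
  constructor
  · intro hS3
    have hsub : Submodule.span ℝ ({v} : Set (Fin 5 → ℝ)) ⊔ Submodule.span ℝ (pairDiffs S)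
        ≤ Submodule.span ℝ S := by
      apply sup_le
      · exact Submodule.span_le.mpr (by simpa using Submodule.subset_span hv)
      · rw [Submodule.span_le]
        rintro x ⟨y, hy, z, hz, rfl⟩
        exact sub_mem (Submodule.subset_span hy) (Submodule.subset_span hz)
    have := Submodule.finrank_mono hsub
    omega
  · intro hD2
    have hsub : Submodule.span ℝ S ≤
        Submodule.span ℝ ({v} : Set (Fin 5 → ℝ)) ⊔ Submodule.span ℝ (pairDiffs S) := by
      rw [Submodule.span_le]
      intro x hx
      have hxeq : x = v + (x - v) := by abel
      rw [SetLike.mem_coe, hxeq]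
      exact Submodule.add_mem _
        (Submodule.mem_sup_left (Submodule.subset_span rfl))
        (Submodule.mem_sup_right (Submodule.subset_span ⟨x, hx, v, hv, rfl⟩))
    have := Submodule.finrank_mono hsub
    omega

noncomputable def liftMap (c : EuclideanSpace ℝ (Fin 3)) :
    EuclideanSpace ℝ (Fin 3) →ₗ[ℝ] (Fin 5 → ℝ) where
  toFun x := ![x 0, x 1, x 2, ⟪x, c⟫_ℝ, ⟪x, c⟫_ℝ]
  map_add' x y := by
    funext i
    fin_cases i <;> simp [inner_add_left]
  map_smul' r x := by
    funext i
    fin_cases i <;> simp [real_inner_smul_left, Finset.mul_sum, mul_assoc]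

lemma liftMap_injective (c : EuclideanSpace ℝ (Fin 3)) : Function.Injective (liftMap c) := by
  intro x y hxy
  have h0 := congrFun hxy 0
  have h1 := congrFun hxy 1
  have h2 := congrFun hxy 2
  simp [liftMap] at h0 h1 h2
  ext i
  fin_cases i <;> assumption

lemma key (b : ℤ × ℤ → EuclideanSpace ℝ (Fin 3)) (ρ : ℤ × ℤ → ℝ)
    (c : EuclideanSpace ℝ (Fin 3)) (k : ℝ) (p : ℤ × ℤ)
    (hρ : ∀ d ∈ ({p, p + (1, 0), p + (0, 1), p + (1, 1)} : Set (ℤ × ℤ)),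
      ρ d = ⟪b d, c⟫_ℝ - k) :
    Module.finrank ℝ (Submodule.span ℝ
      ({mlift b ρ p, mlift b ρ (p + (1, 0)), mlift b ρ (p + (0, 1)),
        mlift b ρ (p + (1, 1))} : Set (Fin 5 → ℝ))) ≤ 3 ↔
    Module.finrank ℝ (Submodule.span ℝ (pairDiffs
      ({b p, b (p + (1, 0)), b (p + (0, 1)), b (p + (1, 1))} :
        Set (EuclideanSpace ℝ (Fin 3))))) ≤ 2 := by
  set w : Fin 5 → ℝ := ![0, 0, 0, -k - 1/2, -k + 1/2] with hw
  have hml : ∀ d ∈ ({p, p + (1, 0), p + (0, 1), p + (1, 1)} : Set (ℤ × ℤ)),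
      mlift b ρ d = liftMap c (b d) + w := by
    intro d hd
    funext i
    fin_cases i <;> simp [mlift, liftMap, hw, hρ d hd] <;> ring
  have hone : ∀ x ∈ ({mlift b ρ p, mlift b ρ (p + (1, 0)), mlift b ρ (p + (0, 1)),
      mlift b ρ (p + (1, 1))} : Set (Fin 5 → ℝ)), x 4 - x 3 = 1 := by
    intro x hx
    simp only [Set.mem_insert_iff, Set.mem_singleton_iff] at hx
    rcases hx with rfl | rfl | rfl | rfl <;> simp [mlift] <;> ring
  rw [hyperplane_iff _ (mlift b ρ p) (by simp) hone]
  have hset : ({mlift b ρ p, mlift b ρ (p + (1, 0)), mlift b ρ (p + (0, 1)),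
      mlift b ρ (p + (1, 1))} : Set (Fin 5 → ℝ)) =
      (fun x => liftMap c x + w) ''
        ({b p, b (p + (1, 0)), b (p + (0, 1)), b (p + (1, 1))} :
          Set (EuclideanSpace ℝ (Fin 3))) := by
    rw [hml p (by simp), hml (p + (1, 0)) (by simp), hml (p + (0, 1)) (by simp),
      hml (p + (1, 1)) (by simp), Set.image_insert_eq, Set.image_insert_eq,
      Set.image_insert_eq, Set.image_singleton]
  rw [hset, pairDiffs_affine_image, Submodule.span_image,
    ← (Submodule.equivMapOfInjective _ (liftMap_injective c) _).finrank_eq]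

/-- An orthogonal binet (with Möbius lift data `ρ`) is a conjugate binet if and only if its
Möbius lift is a conjugate binet, i.e. the four lift vectors of each quad span a submodule of
finrank at most `3`. -/
theorem stmt_4 (bV bF : ℤ × ℤ → EuclideanSpace ℝ (Fin 3)) (ρV ρF : ℤ × ℤ → ℝ)
    (h : ∀ v f : ℤ × ℤ, Incident v f → ⟪bV v, bF f⟫_ℝ = ρV v + ρF f) :
    (IsConjugateNet bV ∧ IsConjugateNet bF) ↔
      (∀ p : ℤ × ℤ,
        Module.finrank ℝ (Submodule.span ℝ
          ({mlift bV ρV p, mlift bV ρV (p + (1, 0)), mlift bV ρV (p + (0, 1)),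
            mlift bV ρV (p + (1, 1))} : Set (Fin 5 → ℝ))) ≤ 3 ∧
        Module.finrank ℝ (Submodule.span ℝ
          ({mlift bF ρF p, mlift bF ρF (p + (1, 0)), mlift bF ρF (p + (0, 1)),
            mlift bF ρF (p + (1, 1))} : Set (Fin 5 → ℝ))) ≤ 3) := by
  have hρV : ∀ p : ℤ × ℤ, ∀ d ∈ ({p, p + (1, 0), p + (0, 1), p + (1, 1)} : Set (ℤ × ℤ)),
      ρV d = ⟪bV d, bF p⟫_ℝ - ρF p := by
    intro p d hd
    simp only [Set.mem_insert_iff, Set.mem_singleton_iff] at hd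
    have hinc : Incident d p := by
      rcases hd with rfl | rfl | rfl | rfl
      · exact Or.inl rfl
      · exact Or.inr (Or.inl rfl)
      · exact Or.inr (Or.inr (Or.inl rfl))
      · exact Or.inr (Or.inr (Or.inr rfl))
    have := h d p hinc
    linarith
  have hρF : ∀ p : ℤ × ℤ, ∀ d ∈ ({p, p + (1, 0), p + (0, 1), p + (1, 1)} : Set (ℤ × ℤ)),
      ρF d = ⟪bF d, bV (p + (1, 1))⟫_ℝ - ρV (p + (1, 1)) := by
    intro p d hd
    simp only [Set.mem_insert_iff, Set.mem_singleton_iff] at hd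
    have hinc : Incident (p + (1, 1)) d := by
      rcases hd with rfl | rfl | rfl | rfl
      · exact Or.inr (Or.inr (Or.inr rfl))
      · exact Or.inr (Or.inr (Or.inl (by rw [add_assoc]; rfl)))
      · exact Or.inr (Or.inl (by rw [add_assoc]; rfl))
      · exact Or.inl rfl
    have := h (p + (1, 1)) d hinc
    rw [real_inner_comm]
    linarith
  constructor
  · rintro ⟨h1, h2⟩ p
    exact ⟨(key bV ρV (bF p) (ρF p) p (hρV p)).mpr (h1 p),
      (key bF ρF (bV (p + (1, 1))) (ρV (p + (1, 1))) p (hρF p)).mpr (h2 p)⟩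
  · intro H
    exact ⟨fun p => (key bV ρV (bF p) (ρF p) p (hρV p)).mp (H p).1,
      fun p => (key bF ρF (bV (p + (1, 1))) (ρV (p + (1, 1))) p (hρF p)).mp (H p).2⟩
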